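/- Let A₁,…,A_d be Hermitian n×n matrices, U ∈ O(d), and Âⱼ = Σₛ u_{js} Aₛ. If there exists a unitary Q ∈ U(n) with Q Âⱼ Q* = Aⱼ for all j, then λ ∈ Λ(A₁,…,A_d) if and only if Uλ ∈ Λ(A₁,…,A_d), i.e. the Clifford spectrum is invariant under the action of U. -/

import Mathlib

open scoped Kronecker Matrix

noncomputable section CliffAux

variable {d m : ℕ}

def gmap (γ : Fin d → Matrix (Fin m) (Fin m) ℂ) (v : Fin d → ℝ) : Matrix (Fin m) (Fin m) ℂ :=
  ∑ j, (v j : ℂ) • γ j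

lemma gmap_pair (γ : Fin d → Matrix (Fin m) (Fin m) ℂ)
    (hsq : ∀ j, γ j * γ j = 1) (hanti : ∀ j k, j ≠ k → γ j * γ k = -(γ k * γ j))
    (v w : Fin d → ℝ) :
    gmap γ v * gmap γ w + gmap γ w * gmap γ v = ((2 * ∑ j, v j * w j : ℝ) : ℂ) • 1 := by
  unfold gmap
  have expand : ∀ (a b : Fin d → ℝ), (∑ j, (a j : ℂ) • γ j) * (∑ k, (b k : ℂ) • γ k)
      = ∑ j, ∑ k, ((a j : ℂ) * (b k : ℂ)) • (γ j * γ k) := by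
    intro a b
    rw [Finset.sum_mul]
    refine Finset.sum_congr rfl fun j _ => ?_
    rw [Finset.mul_sum]
    refine Finset.sum_congr rfl fun k _ => ?_
    rw [smul_mul_assoc, mul_smul_comm, smul_smul]
  rw [expand v w, expand w v, Finset.sum_comm (s := Finset.univ) (t := Finset.univ),
    ← Finset.sum_add_distrib]
  have inner : ∀ j : Fin d,
      (∑ k, ((v k : ℂ) * (w j : ℂ)) • (γ k * γ j)) + (∑ k, ((w j : ℂ) * (v k : ℂ)) • (γ j * γ k))
      = ((2 * (v j * w j) : ℝ) : ℂ) • 1 := by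
    intro j
    rw [← Finset.sum_add_distrib, Finset.sum_eq_single j]
    · rw [hsq j, mul_comm ((w j : ℂ)), ← add_smul]
      push_cast; ring_nf
    · intro k _ hk
      rw [hanti k j hk, smul_neg, mul_comm ((w j : ℂ)), neg_add_cancel]
    · intro h; exact absurd (Finset.mem_univ j) h
  rw [Finset.sum_congr rfl fun j _ => inner j, ← Finset.sum_smul]
  push_cast
  rw [Finset.mul_sum]

end CliffAux

section More
open RealInnerProductSpace

variable {d m : ℕ}

lemma gmap_sub_smul (γ : Fin d → Matrix (Fin m) (Fin m) ℂ)
    (x v : EuclideanSpace ℝ (Fin d)) (c : ℝ) :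
    gmap γ (x - c • v) = gmap γ x - (c : ℂ) • gmap γ v := by
  unfold gmap
  rw [Finset.smul_sum, ← Finset.sum_sub_distrib]
  refine Finset.sum_congr rfl fun j _ => ?_
  have : (x.ofLp - c • v.ofLp) j = x j - c * v j := rfl
  rw [this]
  push_cast
  rw [sub_smul, smul_smul]

lemma gmap_sq (γ : Fin d → Matrix (Fin m) (Fin m) ℂ)
    (hsq : ∀ j, γ j * γ j = 1) (hanti : ∀ j k, j ≠ k → γ j * γ k = -(γ k * γ j))
    (v : Fin d → ℝ) :
    gmap γ v * gmap γ v = ((∑ j, v j * v j : ℝ) : ℂ) • 1 := by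
  have h := gmap_pair γ hsq hanti v v
  have h2 : (2:ℂ) • (gmap γ v * gmap γ v)
      = (2:ℂ) • (((∑ j, v j * v j : ℝ) : ℂ) • (1 : Matrix (Fin m) (Fin m) ℂ)) := by
    rw [two_smul]
    rw [h]
    push_cast
    rw [two_mul, add_smul, two_smul]
  exact smul_right_injective _ (two_ne_zero) h2

lemma euclid_inner_eq (v w : EuclideanSpace ℝ (Fin d)) :
    ⟪v, w⟫ = ∑ j, v j * w j := by
  simp [PiLp.inner_apply, RCLike.inner_apply, conj_trivial]
  exact Finset.sum_congr rfl fun _ _ => mul_comm _ _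

lemma reflection_intertwine (γ : Fin d → Matrix (Fin m) (Fin m) ℂ)
    (hsq : ∀ j, γ j * γ j = 1) (hanti : ∀ j k, j ≠ k → γ j * γ k = -(γ k * γ j))
    (v : EuclideanSpace ℝ (Fin d)) :
    ∃ W : Matrix (Fin m) (Fin m) ℂ, IsUnit W ∧ ∃ ε : ℂ, ε * ε = 1 ∧
      ∀ x : EuclideanSpace ℝ (Fin d),
        W * gmap γ ((Submodule.reflection (ℝ ∙ v)ᗮ) x) = ε • (gmap γ x * W) := by
  by_cases hv : v = 0
  · refine ⟨1, isUnit_one, 1, by norm_num, fun x => ?_⟩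
    subst hv
    have hx : x ∈ (ℝ ∙ (0 : EuclideanSpace ℝ (Fin d)))ᗮ := by
      rw [Submodule.span_zero_singleton, Submodule.bot_orthogonal_eq_top]
      exact Submodule.mem_top
    rw [Submodule.reflection_mem_subspace_eq_self hx, one_mul, one_smul, mul_one]
  · have hnorm : (∑ j, v j * v j : ℝ) = ‖v‖ ^ 2 := by
      rw [← euclid_inner_eq v v, real_inner_self_eq_norm_sq]
    have hpos : (0:ℝ) < ∑ j, v j * v j := by
      rw [hnorm]; exact pow_pos (norm_pos_iff.mpr hv) 2
    have hWsq : gmap γ v * gmap γ v = ((∑ j, v j * v j : ℝ) : ℂ) • 1 :=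
      gmap_sq γ hsq hanti v
    have hmul : gmap γ v * ((((∑ j, v j * v j : ℝ) : ℂ))⁻¹ • gmap γ v) = 1 := by
      rw [mul_smul_comm, hWsq, smul_smul, inv_mul_cancel₀ (by exact_mod_cast hpos.ne'), one_smul]
    refine ⟨gmap γ v, ⟨⟨gmap γ v, _, hmul, (mul_eq_one_comm).mp hmul⟩, rfl⟩,
      -1, by norm_num, fun x => ?_⟩
    have hρ : (Submodule.reflection (ℝ ∙ v)ᗮ) x = x - ((2 * ⟪v, x⟫) / (‖v‖ ^ 2)) • v := by
      rw [Submodule.reflection_apply, Submodule.starProjection_orthogonal_val,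
        Submodule.starProjection_singleton]
      simp only [RCLike.ofReal_real_eq_id, id_eq]
      module
    rw [hρ, WithLp.ofLp_sub, WithLp.ofLp_smul, gmap_sub_smul, mul_sub, mul_smul_comm, hWsq, smul_smul]
    have hc : ((2 * ⟪v, x⟫ / ‖v‖ ^ 2 : ℝ) : ℂ) * ((∑ j, v j * v j : ℝ) : ℂ)
        = ((2 * ∑ j, v j * x j : ℝ) : ℂ) := by
      rw [← Complex.ofReal_mul]
      congr 1
      rw [hnorm, div_mul_cancel₀ _ (pow_ne_zero 2 (norm_ne_zero_iff.mpr hv)), euclid_inner_eq]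
    rw [hc]
    have hpair := gmap_pair γ hsq hanti v x
    have h3 : gmap γ v * gmap γ x
        = ((2 * ∑ j, v j * x j : ℝ) : ℂ) • 1 - gmap γ x * gmap γ v := eq_sub_of_add_eq hpair
    rw [h3, neg_smul, one_smul]
    abel

end More

section Main
variable {d m : ℕ}

lemma intertwine_isometry (γ : Fin d → Matrix (Fin m) (Fin m) ℂ)
    (hsq : ∀ j, γ j * γ j = 1) (hanti : ∀ j k, j ≠ k → γ j * γ k = -(γ k * γ j))
    (φ : EuclideanSpace ℝ (Fin d) ≃ₗᵢ[ℝ] EuclideanSpace ℝ (Fin d)) :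
    ∃ W : Matrix (Fin m) (Fin m) ℂ, IsUnit W ∧ ∃ ε : ℂ, ε * ε = 1 ∧
      ∀ x : EuclideanSpace ℝ (Fin d), W * gmap γ (φ x) = ε • (gmap γ x * W) := by
  obtain ⟨l, -, hl⟩ := φ.reflections_generate_dim
  subst hl
  induction l with
  | nil =>
    exact ⟨1, isUnit_one, 1, by norm_num, fun x => by
      simp only [List.map_nil, List.prod_nil, LinearIsometryEquiv.coe_one, id_eq,
        one_mul, mul_one, one_smul]⟩
  | cons v l IH =>
    obtain ⟨W2, hW2, ε2, hε2, h2⟩ := IH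
    obtain ⟨W1, hW1, ε1, hε1, h1⟩ := reflection_intertwine γ hsq hanti v
    refine ⟨W2 * W1, hW2.mul hW1, ε1 * ε2,
      by rw [mul_mul_mul_comm, hε1, hε2, one_mul], fun x => ?_⟩
    have happ : (((v :: l).map fun w => Submodule.reflection (ℝ ∙ w)ᗮ).prod) x
        = Submodule.reflection (ℝ ∙ v)ᗮ ((((l.map fun w => Submodule.reflection (ℝ ∙ w)ᗮ).prod)) x) := by
      rw [List.map_cons, List.prod_cons, LinearIsometryEquiv.coe_mul, Function.comp_apply]
    rw [happ, mul_assoc, h1, mul_smul_comm, ← mul_assoc, h2, smul_mul_assoc, smul_smul,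
      mul_assoc]

end Main

section Assemble
variable {d n m : ℕ}

lemma kronecker_sum' {α : Type*} [CommRing α] {ι : Type*} (s : Finset ι)
    (B : Matrix (Fin n) (Fin n) α) (f : ι → Matrix (Fin m) (Fin m) α) :
    B ⊗ₖ (∑ j ∈ s, f j) = ∑ j ∈ s, B ⊗ₖ f j := by
  ext ⟨i1, i2⟩ ⟨j1, j2⟩
  simp [Matrix.kroneckerMap_apply, Matrix.sum_apply, Finset.mul_sum]

lemma gmap_single (γ : Fin d → Matrix (Fin m) (Fin m) ℂ) (s : Fin d) :
    gmap γ (Pi.single s 1) = γ s := by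
  unfold gmap
  rw [Finset.sum_eq_single s]
  · simp
  · intro k _ hk; simp [Pi.single_apply, hk]
  · intro h; exact absurd (Finset.mem_univ s) h

lemma exists_iso (U : Matrix (Fin d) (Fin d) ℝ) (hU : U ∈ Matrix.orthogonalGroup (Fin d) ℝ) :
    ∃ φ : EuclideanSpace ℝ (Fin d) ≃ₗᵢ[ℝ] EuclideanSpace ℝ (Fin d),
      ∀ x : EuclideanSpace ℝ (Fin d), φ x = U.mulVec x := by
  have hst : star U = Uᵀ := by
    rw [Matrix.star_eq_conjTranspose, Matrix.conjTranspose_eq_transpose_of_trivial]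
  have hUtU : Uᵀ * U = 1 := by rw [← hst]; exact ((Matrix.mem_orthogonalGroup_iff' (Fin d) ℝ).mp hU)
  have hUUt : U * Uᵀ = 1 := by rw [← hst]; exact ((Matrix.mem_orthogonalGroup_iff (Fin d) ℝ).mp hU)
  have key : ∀ x y : Fin d → ℝ, (U *ᵥ x) ⬝ᵥ (U *ᵥ y) = x ⬝ᵥ y := by
    intro x y
    rw [Matrix.dotProduct_mulVec, ← Matrix.mulVec_transpose, Matrix.mulVec_mulVec, hUtU,
      Matrix.one_mulVec]
  refine ⟨LinearEquiv.isometryOfInner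
    { toFun := fun x => WithLp.toLp 2 (U.mulVec x)
      map_add' := fun x y => by ext i; simp [Matrix.mulVec_add]
      map_smul' := fun c x => by ext i; simp [Matrix.mulVec_smul]
      invFun := fun x => WithLp.toLp 2 (Uᵀ.mulVec x)
      left_inv := fun x => by
        ext i
        show (Uᵀ *ᵥ (U *ᵥ x.ofLp)) i = x i
        rw [Matrix.mulVec_mulVec, hUtU, Matrix.one_mulVec]
      right_inv := fun x => by
        ext i
        show (U *ᵥ (Uᵀ *ᵥ x.ofLp)) i = x i
        rw [Matrix.mulVec_mulVec, hUUt, Matrix.one_mulVec] }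
    (fun x y => by
      rw [euclid_inner_eq, euclid_inner_eq]
      exact key x y), fun x => rfl⟩

end Assemble

section Final
variable {d n m : ℕ}

lemma sum_kronecker' {α : Type*} [CommRing α] {ι : Type*} (s : Finset ι)
    (f : ι → Matrix (Fin n) (Fin n) α) (B : Matrix (Fin m) (Fin m) α) :
    (∑ j ∈ s, f j) ⊗ₖ B = ∑ j ∈ s, f j ⊗ₖ B := by
  ext ⟨i1, i2⟩ ⟨j1, j2⟩
  simp [Matrix.kroneckerMap_apply, Matrix.sum_apply, Finset.sum_mul]

end Final

lemma myIsUnit_mul_left_iff {R : Type*} [Monoid R] {a : R} (ha : IsUnit a) (b : R) :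
    IsUnit (a * b) ↔ IsUnit b := by
  obtain ⟨u, rfl⟩ := ha; exact Units.isUnit_units_mul u b

lemma myIsUnit_mul_right_iff {R : Type*} [Monoid R] {a : R} (ha : IsUnit a) (b : R) :
    IsUnit (b * a) ↔ IsUnit b := by
  obtain ⟨u, rfl⟩ := ha; exact Units.isUnit_mul_units b u

theorem clifford_spectrum_symmetry
    {d n m : ℕ} (A : Fin d → Matrix (Fin n) (Fin n) ℂ)
    (hA : ∀ j, (A j).IsHermitian)
    (γ : Fin d → Matrix (Fin m) (Fin m) ℂ)
    (hherm : ∀ j, (γ j).IsHermitian)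
    (hsq : ∀ j, γ j * γ j = 1)
    (hanti : ∀ j k, j ≠ k → γ j * γ k = -(γ k * γ j))
    (U : Matrix (Fin d) (Fin d) ℝ) (hU : U ∈ Matrix.orthogonalGroup (Fin d) ℝ)
    (Q : Matrix (Fin n) (Fin n) ℂ) (hQ : Q ∈ Matrix.unitaryGroup (Fin n) ℂ)
    (hconj : ∀ j, Q * (∑ s, (U j s : ℂ) • A s) * Qᴴ = A j)
    (lam : Fin d → ℝ) :
    (¬ IsUnit (∑ j, ((A j - (lam j : ℂ) • 1) ⊗ₖ γ j))) ↔
    (¬ IsUnit (∑ j, ((A j - (U.mulVec lam j : ℂ) • 1) ⊗ₖ γ j))) := by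
  have hQ1 : Qᴴ * Q = 1 := by
    have := hQ.1; rwa [Matrix.star_eq_conjTranspose] at this
  have hQ2 : Q * Qᴴ = 1 := by
    have := hQ.2; rwa [Matrix.star_eq_conjTranspose] at this
  obtain ⟨φ, hφ⟩ := exists_iso U hU
  obtain ⟨W, hW, ε, hε, hint⟩ := intertwine_isometry γ hsq hanti φ
  -- the intertwining relation on basis vectors
  have hsW : ∀ s, W * gmap γ (fun j => U j s) = ε • (γ s * W) := by
    intro s
    have h0 := hint ((WithLp.equiv 2 (Fin d → ℝ)).symm (Pi.single s 1))
    rw [hφ] at h0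
    have h : W * gmap γ (U *ᵥ (Pi.single s 1 : Fin d → ℝ))
        = ε • (gmap γ (Pi.single s 1 : Fin d → ℝ) * W) := h0
    rw [gmap_single, Matrix.mulVec_single] at h
    have hfun : (MulOpposite.op (1:ℝ) • U.col s) = fun i => U i s := by funext i; simp
    rwa [hfun] at h
  set B : Fin d → Matrix (Fin n) (Fin n) ℂ := fun s => A s - (lam s : ℂ) • 1 with hB
  set Mhat : Matrix (Fin n × Fin m) (Fin n × Fin m) ℂ :=
    ∑ s, B s ⊗ₖ gmap γ (fun j => U j s) with hMhat
  set L : Matrix (Fin n × Fin m) (Fin n × Fin m) ℂ := ∑ s, B s ⊗ₖ γ s with hL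
  -- rewrite Mhat as ∑ j, (∑ s, U j s • B s) ⊗ₖ γ j
  have hM : Mhat = ∑ j, (∑ s, ((U j s : ℝ) : ℂ) • B s) ⊗ₖ γ j := by
    rw [hMhat]
    have lhs : ∀ s : Fin d, B s ⊗ₖ gmap γ (fun j => U j s)
        = ∑ j, ((U j s : ℝ) : ℂ) • (B s ⊗ₖ γ j) := by
      intro s
      unfold gmap
      rw [kronecker_sum']
      exact Finset.sum_congr rfl fun j _ => Matrix.kronecker_smul _ _ _
    have rhs : ∀ j : Fin d, (∑ s, ((U j s : ℝ) : ℂ) • B s) ⊗ₖ γ j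
        = ∑ s, ((U j s : ℝ) : ℂ) • (B s ⊗ₖ γ j) := by
      intro j
      rw [sum_kronecker']
      exact Finset.sum_congr rfl fun s _ => Matrix.smul_kronecker _ _ _
    rw [Finset.sum_congr rfl fun s _ => lhs s, Finset.sum_congr rfl fun j _ => rhs j,
      Finset.sum_comm]
  -- the transformed localizer
  have hL' : (∑ j, ((A j - (U.mulVec lam j : ℂ) • 1) ⊗ₖ γ j))
      = (Q ⊗ₖ (1 : Matrix (Fin m) (Fin m) ℂ)) * Mhat * (Qᴴ ⊗ₖ 1) := by
    rw [hM, Finset.mul_sum, Finset.sum_mul]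
    refine Finset.sum_congr rfl fun j _ => ?_
    rw [← Matrix.mul_kronecker_mul, ← Matrix.mul_kronecker_mul, one_mul, mul_one]
    have hX : (∑ s, ((U j s : ℝ) : ℂ) • B s)
        = (∑ s, ((U j s : ℝ) : ℂ) • A s) - ((U.mulVec lam j : ℝ) : ℂ) • 1 := by
      have : (U.mulVec lam j : ℝ) = ∑ s, U j s * lam s := rfl
      rw [this]
      push_cast
      rw [Finset.sum_smul]
      rw [← Finset.sum_sub_distrib]
      refine Finset.sum_congr rfl fun s _ => ?_
      rw [hB]
      rw [smul_sub, smul_smul]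
    have hQX : Q * (∑ s, ((U j s : ℝ) : ℂ) • B s) * Qᴴ
        = A j - ((U.mulVec lam j : ℝ) : ℂ) • 1 := by
      rw [hX, mul_sub, sub_mul, hconj j, mul_smul_comm, mul_one, smul_mul_assoc, hQ2]
    rw [hQX]
  -- intertwining at the level of localizers
  have hC : ((1 : Matrix (Fin n) (Fin n) ℂ) ⊗ₖ W) * Mhat = ε • (L * (1 ⊗ₖ W)) := by
    rw [hMhat, hL, Finset.mul_sum, Finset.sum_mul, Finset.smul_sum]
    refine Finset.sum_congr rfl fun s _ => ?_
    rw [← Matrix.mul_kronecker_mul, one_mul, hsW s, Matrix.kronecker_smul,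
      ← Matrix.mul_kronecker_mul, mul_one]
  -- units
  obtain ⟨w0, hw0⟩ := hW
  refine not_congr (Iff.symm ?_)
  have uQ : IsUnit (Q ⊗ₖ (1 : Matrix (Fin m) (Fin m) ℂ)) :=
    ⟨⟨Q ⊗ₖ 1, Qᴴ ⊗ₖ 1,
      by rw [← Matrix.mul_kronecker_mul, hQ2, one_mul, Matrix.one_kronecker_one],
      by rw [← Matrix.mul_kronecker_mul, hQ1, one_mul, Matrix.one_kronecker_one]⟩, rfl⟩
  have uQ' : IsUnit (Qᴴ ⊗ₖ (1 : Matrix (Fin m) (Fin m) ℂ)) :=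
    ⟨⟨Qᴴ ⊗ₖ 1, Q ⊗ₖ 1,
      by rw [← Matrix.mul_kronecker_mul, hQ1, one_mul, Matrix.one_kronecker_one],
      by rw [← Matrix.mul_kronecker_mul, hQ2, one_mul, Matrix.one_kronecker_one]⟩, rfl⟩
  have uW : IsUnit ((1 : Matrix (Fin n) (Fin n) ℂ) ⊗ₖ W) :=
    ⟨⟨1 ⊗ₖ W, 1 ⊗ₖ ↑w0⁻¹,
      by rw [← Matrix.mul_kronecker_mul, one_mul, ← hw0, Units.mul_inv,
        Matrix.one_kronecker_one],
      by rw [← Matrix.mul_kronecker_mul, one_mul, ← hw0, Units.inv_mul,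
        Matrix.one_kronecker_one]⟩, rfl⟩
  have uε : IsUnit (ε • (1 : Matrix (Fin n × Fin m) (Fin n × Fin m) ℂ)) :=
    ⟨⟨ε • 1, ε • 1, by rw [smul_mul_assoc, one_mul, smul_smul, hε, one_smul],
      by rw [smul_mul_assoc, one_mul, smul_smul, hε, one_smul]⟩, rfl⟩
  calc IsUnit (∑ j, ((A j - (U.mulVec lam j : ℂ) • 1) ⊗ₖ γ j))
      ↔ IsUnit ((Q ⊗ₖ (1 : Matrix (Fin m) (Fin m) ℂ)) * Mhat * (Qᴴ ⊗ₖ 1)) := by rw [hL']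
    _ ↔ IsUnit Mhat := by
        rw [mul_assoc, myIsUnit_mul_left_iff uQ, myIsUnit_mul_right_iff uQ']
    _ ↔ IsUnit L := by
        rw [← myIsUnit_mul_left_iff uW Mhat, hC,
          show ε • (L * ((1 : Matrix (Fin n) (Fin n) ℂ) ⊗ₖ W))
              = (ε • 1) * (L * (1 ⊗ₖ W)) by rw [smul_mul_assoc, one_mul],
          myIsUnit_mul_left_iff uε, myIsUnit_mul_right_iff uW]
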